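/- Let X be a compact subset of ℝ^N and suppose there exist an open set U ⊆ ℝ^N with X ⊆ U and a continuous retraction r : U → X (so r(x) = x for all x ∈ X). Then there exist a finite CW complex K and continuous maps d : K → X and s : X → K with d ∘ s equal to the identity of X; in particular X is finitely dominated. -/

import Mathlib

open Metric Set

/-- A CW-structure on a topological space `X`: a family of cells in each dimension `n`,
with characteristic maps defined on the closed unit ball of `ℝⁿ`, satisfying the usual
axioms of a CW complex (characteristic maps are homeomorphisms from the open ball onto
the open cells, the open cells are disjoint and cover `X`, closure-finiteness, and the
weak topology). -/
structure CWStructure (X : Type*) [TopologicalSpace X] where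
  /-- The index type of the `n`-cells. -/
  cell (n : ℕ) : Type
  /-- The characteristic map of each `n`-cell. -/
  map (n : ℕ) (i : cell n) : PartialEquiv (EuclideanSpace ℝ (Fin n)) X
  source_eq (n : ℕ) (i : cell n) : (map n i).source = closedBall 0 1
  continuousOn (n : ℕ) (i : cell n) : ContinuousOn (map n i) (closedBall 0 1)
  continuousOn_symm (n : ℕ) (i : cell n) : ContinuousOn (map n i).symm (map n i).target
  pairwiseDisjoint' :
    (Set.univ : Set (Σ n, cell n)).PairwiseDisjoint
      (fun ni ↦ ↑(map ni.1 ni.2) '' ball 0 1)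
  mapsTo (n : ℕ) (i : cell n) : ∃ I : Π m, Finset (cell m),
    Set.MapsTo (map n i) (sphere 0 1)
      (⋃ (m < n) (j ∈ I m), ↑(map m j) '' closedBall 0 1)
  closed' (A : Set X) :
    (∀ n (i : cell n), IsClosed (A ∩ ↑(map n i) '' closedBall 0 1)) → IsClosed A
  union' : ⋃ (n : ℕ) (i : cell n), ↑(map n i) '' closedBall 0 1 = Set.univ

/-- A CW-structure is finite if it has finitely many cells in total. -/
def CWStructure.IsFinite {X : Type*} [TopologicalSpace X] (c : CWStructure X) : Prop :=
  Finite (Σ n, c.cell n)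

/-- A CW-structure is countable if it has countably many cells in total. -/
def CWStructure.IsCountable {X : Type*} [TopologicalSpace X] (c : CWStructure X) : Prop :=
  Countable (Σ n, c.cell n)

/-- A CW-structure has dimension at most `m` if it has no cells in dimensions `> m`. -/
def CWStructure.DimLE {X : Type*} [TopologicalSpace X] (c : CWStructure X) (m : ℕ) : Prop :=
  ∀ n, m < n → IsEmpty (c.cell n)

/-- A topological space `X` is finitely dominated if there are a finite CW complex `K` and
continuous maps `d : K → X`, `s : X → K` such that `d ∘ s` is homotopic to the identity. -/
def FinitelyDominated (X : Type*) [TopologicalSpace X] : Prop :=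
  ∃ (K : Type) (_ : TopologicalSpace K) (c : CWStructure K), c.IsFinite ∧
    ∃ (d : C(K, X)) (s : C(X, K)),
      (d.comp s).Homotopic (ContinuousMap.id X)

noncomputable section
namespace CubeCW

variable {n : ℕ}

abbrev E (n : ℕ) := EuclideanSpace ℝ (Fin n)

def supN (x : E n) : ℝ := ‖(fun i => x i : Fin n → ℝ)‖

lemma supN_nonneg (x : E n) : 0 ≤ supN x := norm_nonneg _

lemma abs_coord_le_supN (x : E n) (i : Fin n) : |x i| ≤ supN x := by
  simpa [supN, Real.norm_eq_abs] using norm_le_pi_norm (fun i => x i : Fin n → ℝ) i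

lemma supN_le_iff {x : E n} {r : ℝ} (hr : 0 ≤ r) : supN x ≤ r ↔ ∀ i, |x i| ≤ r := by
  simpa [supN, Real.norm_eq_abs] using pi_norm_le_iff_of_nonneg (x := (fun i => x i : Fin n → ℝ)) hr

lemma supN_eq_zero {x : E n} : supN x = 0 ↔ x = 0 := by
  rw [supN, norm_eq_zero]
  exact ⟨fun h => PiLp.ext (congrFun h), fun h => by subst h; rfl⟩

lemma supN_smul (c : ℝ) (x : E n) : supN (c • x) = |c| * supN x := by
  have : (fun i => (c • x) i : Fin n → ℝ) = c • (fun i => x i : Fin n → ℝ) := rfl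
  rw [supN, this, norm_smul, Real.norm_eq_abs, supN]

lemma abs_coord_le_norm (x : E n) (i : Fin n) : |x i| ≤ ‖x‖ := by
  have := EuclideanSpace.norm_eq x
  have h1 : |x i| = √(‖x i‖^2) := by
    rw [Real.sqrt_sq_eq_abs]; simp [Real.norm_eq_abs, sq_abs]
  rw [this, h1]
  apply Real.sqrt_le_sqrt
  exact Finset.single_le_sum (f := fun j => ‖x j‖^2) (fun j _ => sq_nonneg _) (Finset.mem_univ i)

lemma supN_le_norm (x : E n) : supN x ≤ ‖x‖ :=
  (supN_le_iff (norm_nonneg x)).2 fun i => abs_coord_le_norm x i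

lemma norm_le_sqrt_mul_supN (x : E n) : ‖x‖ ≤ √n * supN x := by
  rw [EuclideanSpace.norm_eq]
  calc √(∑ i, ‖x i‖^2) ≤ √(∑ _i : Fin n, (supN x)^2) := by
        apply Real.sqrt_le_sqrt
        apply Finset.sum_le_sum
        intro i _
        have := abs_coord_le_supN x i
        have h2 : ‖x i‖ = |x i| := Real.norm_eq_abs _
        rw [h2]
        exact pow_le_pow_left₀ (abs_nonneg _) this 2
    _ = √(n * (supN x)^2) := by simp [Finset.sum_const, mul_comm]
    _ = √n * supN x := by
        rw [Real.sqrt_mul (by positivity), Real.sqrt_sq (supN_nonneg x)]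

lemma continuous_supN : Continuous (supN (n := n)) := by
  have : Continuous fun x : E n => (fun i => x i : Fin n → ℝ) :=
    continuous_pi fun i => (continuous_apply i).comp (PiLp.continuous_ofLp 2 _)
  exact this.norm

lemma exists_coord_eq_supN (hn : 0 < n) (x : E n) : ∃ i, |x i| = supN x := by
  have h := Pi.norm_def (fun i => x i : Fin n → ℝ)
  obtain ⟨i, _, hi⟩ := Finset.exists_mem_eq_sup (Finset.univ : Finset (Fin n))
    (Finset.univ_nonempty_iff.2 ⟨⟨0, hn⟩⟩) (fun b => ‖x b‖₊)
  refine ⟨i, ?_⟩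
  rw [supN, h, hi]
  simp [Real.norm_eq_abs, nnnorm, Real.nnabs]


/-! ### The radial homeomorphism between the Euclidean ball and the sup-norm cube -/

open scoped Classical in
def ballToCube (x : E n) : E n := if x = 0 then 0 else (‖x‖ / supN x) • x

open scoped Classical in
def cubeToBall (y : E n) : E n := if y = 0 then 0 else (supN y / ‖y‖) • y

lemma ballToCube_zero : ballToCube (0 : E n) = 0 := by simp [ballToCube]

lemma supN_pos {x : E n} (hx : x ≠ 0) : 0 < supN x :=
  lt_of_le_of_ne (supN_nonneg x) (fun h => hx (supN_eq_zero.1 h.symm))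

lemma supN_zero : supN (0 : E n) = 0 := supN_eq_zero.2 rfl

lemma supN_ballToCube (x : E n) : supN (ballToCube x) = ‖x‖ := by
  rcases eq_or_ne x 0 with rfl | hx
  · rw [ballToCube_zero, supN_zero, norm_zero]
  · rw [ballToCube, if_neg hx, supN_smul,
      abs_of_nonneg (div_nonneg (norm_nonneg _) (supN_nonneg _)), div_mul_cancel₀]
    exact (supN_pos hx).ne'

lemma norm_cubeToBall (y : E n) : ‖cubeToBall y‖ = supN y := by
  rcases eq_or_ne y 0 with rfl | hy
  · rw [cubeToBall, if_pos rfl, norm_zero, supN_zero]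
  · rw [cubeToBall, if_neg hy, norm_smul, Real.norm_eq_abs,
      abs_of_nonneg (div_nonneg (supN_nonneg _) (norm_nonneg _)), div_mul_cancel₀]
    exact (norm_pos_iff.2 hy).ne'

lemma cubeToBall_ballToCube (x : E n) : cubeToBall (ballToCube x) = x := by
  rcases eq_or_ne x 0 with rfl | hx
  · rw [ballToCube_zero, cubeToBall, if_pos rfl]
  · have h1 : supN x ≠ 0 := (supN_pos hx).ne'
    have h2 : ‖x‖ ≠ 0 := (norm_pos_iff.2 hx).ne'
    have hb : ballToCube x ≠ 0 := by
      intro h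
      have h3 := supN_ballToCube x
      rw [h, supN_zero] at h3
      exact h2 h3.symm
    rw [cubeToBall, if_neg hb, supN_ballToCube, ballToCube, if_neg hx, norm_smul, smul_smul]
    rw [Real.norm_eq_abs, abs_of_nonneg (div_nonneg (norm_nonneg _) (supN_nonneg _))]
    have hc : ‖x‖ / (‖x‖ / supN x * ‖x‖) * (‖x‖ / supN x) = 1 := by
      field_simp
    rw [hc, one_smul]

lemma ballToCube_cubeToBall (y : E n) : ballToCube (cubeToBall y) = y := by
  rcases eq_or_ne y 0 with rfl | hy
  · rw [cubeToBall, if_pos rfl, ballToCube_zero]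
  · have hb : cubeToBall y ≠ 0 := by
      intro h
      have hn := norm_cubeToBall y
      rw [h, norm_zero] at hn
      exact hy (supN_eq_zero.1 hn.symm)
    have h1 : supN y ≠ 0 := (supN_pos hy).ne'
    have h2 : ‖y‖ ≠ 0 := (norm_pos_iff.2 hy).ne'
    rw [ballToCube, if_neg hb, norm_cubeToBall, cubeToBall, if_neg hy, supN_smul, smul_smul]
    rw [abs_of_nonneg (div_nonneg (supN_nonneg _) (norm_nonneg _))]
    have hc : supN y / (supN y / ‖y‖ * supN y) * (supN y / ‖y‖) = 1 := by
      field_simp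
    rw [hc, one_smul]

lemma norm_ballToCube_le (x : E n) : ‖ballToCube x‖ ≤ √n * ‖x‖ := by
  rcases eq_or_ne x 0 with rfl | hx
  · rw [ballToCube_zero]; simp
  · rw [ballToCube, if_neg hx, norm_smul, Real.norm_eq_abs,
      abs_of_nonneg (div_nonneg (norm_nonneg _) (supN_nonneg _))]
    rw [div_mul_eq_mul_div, div_le_iff₀ (supN_pos hx)]
    calc ‖x‖ * ‖x‖ ≤ (√n * supN x) * ‖x‖ :=
          mul_le_mul_of_nonneg_right (norm_le_sqrt_mul_supN x) (norm_nonneg x)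
      _ = √n * ‖x‖ * supN x := by ring

lemma continuous_ballToCube : Continuous (ballToCube (n := n)) := by
  rw [continuous_iff_continuousAt]
  intro x
  rcases eq_or_ne x 0 with rfl | hx
  · rw [ContinuousAt, ballToCube_zero]
    apply squeeze_zero_norm norm_ballToCube_le
    have : Filter.Tendsto (fun x : E n => ‖x‖) (nhds 0) (nhds 0) := by
      simpa using continuous_norm.tendsto (0 : E n)
    simpa using this.const_mul (√n)
  · have hev : ∀ᶠ y in nhds x, ballToCube y = (‖y‖ / supN y) • y := by
      filter_upwards [isOpen_compl_singleton.mem_nhds hx] with y hy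
      rw [ballToCube, if_neg (by simpa using hy)]
    apply ContinuousAt.congr ?_ (hev.mono fun y hy => hy.symm)
    exact ((continuous_norm.continuousAt.div (continuous_supN.continuousAt) (supN_pos hx).ne').smul
      continuousAt_id)

lemma continuous_cubeToBall : Continuous (cubeToBall (n := n)) := by
  rw [continuous_iff_continuousAt]
  intro x
  rcases eq_or_ne x 0 with rfl | hx
  · have hle : ∀ y : E n, ‖cubeToBall y‖ ≤ ‖y‖ := by
      intro y; rw [norm_cubeToBall]; exact supN_le_norm y
    rw [ContinuousAt]
    simp only [cubeToBall, if_pos rfl]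
    apply squeeze_zero_norm hle
    simpa using continuous_norm.tendsto (0 : E n)
  · have hev : ∀ᶠ y in nhds x, cubeToBall y = (supN y / ‖y‖) • y := by
      filter_upwards [isOpen_compl_singleton.mem_nhds hx] with y hy
      rw [cubeToBall, if_neg (by simpa using hy)]
    apply ContinuousAt.congr ?_ (hev.mono fun y hy => hy.symm)
    exact ((continuous_supN.continuousAt.div (continuous_norm.continuousAt)
      (norm_pos_iff.2 hx).ne').smul continuousAt_id)


/-! ### Clamping -/

def cl (t : ℝ) : ℝ := max (-1) (min 1 t)

lemma cl_mem (t : ℝ) : -1 ≤ cl t ∧ cl t ≤ 1 :=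
  ⟨le_max_left _ _, max_le (by norm_num) (min_le_left _ _)⟩

lemma cl_eq_self {t : ℝ} (h1 : -1 ≤ t) (h2 : t ≤ 1) : cl t = t := by
  rw [cl, min_eq_right h2, max_eq_right h1]

lemma continuous_cl : Continuous cl :=
  continuous_const.max (continuous_const.min continuous_id)

/-! ### Faces of the cubical grid -/

variable {N : ℕ}

def closedFace (h : ℝ) (F : Fin N → ℤ × Bool) : Set (E N) :=
  {y | ∀ k, if (F k).2 then h * (F k).1 ≤ y k ∧ y k ≤ h * ((F k).1 + 1) else y k = h * (F k).1}

def openFace (h : ℝ) (F : Fin N → ℤ × Bool) : Set (E N) :=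
  {y | ∀ k, if (F k).2 then h * (F k).1 < y k ∧ y k < h * ((F k).1 + 1) else y k = h * (F k).1}

lemma openFace_subset_closedFace (h : ℝ) (F : Fin N → ℤ × Bool) :
    openFace h F ⊆ closedFace h F := by
  intro y hy k
  have h1 := hy k
  by_cases hk : (F k).2 = true
  · simp only [hk, if_true] at h1 ⊢
    exact ⟨h1.1.le, h1.2.le⟩
  · simp only [hk, if_false] at h1 ⊢
    · exact h1

def dimF (F : Fin N → ℤ × Bool) : ℕ := Fintype.card {k // (F k).2 = true}

lemma dimF_le (F : Fin N → ℤ × Bool) : dimF F ≤ N := by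
  classical
  calc dimF F ≤ Fintype.card (Fin N) := Fintype.card_subtype_le _
    _ = N := Fintype.card_fin N

def eqF {n : ℕ} (F : Fin N → ℤ × Bool) (hn : dimF F = n) : {k // (F k).2 = true} ≃ Fin n :=
  Fintype.equivFinOfCardEq hn

def chartF (h : ℝ) {n : ℕ} (F : Fin N → ℤ × Bool) (hn : dimF F = n) (x : E n) : E N :=
  WithLp.toLp 2 fun k =>
    if hk : (F k).2 = true then
      h * ((F k).1 + (cl (ballToCube x (eqF F hn ⟨k, hk⟩)) + 1) / 2)
    else h * (F k).1

def chartFInv (h : ℝ) {n : ℕ} (F : Fin N → ℤ × Bool) (hn : dimF F = n) (y : E N) : E n :=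
  cubeToBall (WithLp.toLp 2 (fun i => cl (2 * (y ((eqF F hn).symm i).1 / h - (F ((eqF F hn).symm i).1).1) - 1)))

lemma chartF_mem_closedFace {h : ℝ} (hh : 0 ≤ h) {n : ℕ} (F : Fin N → ℤ × Bool)
    (hn : dimF F = n) (x : E n) : chartF h F hn x ∈ closedFace h F := by
  intro k
  by_cases hk : (F k).2 = true
  · simp only [if_pos hk]
    have hc := cl_mem (ballToCube x (eqF F hn ⟨k, hk⟩))
    set t := cl (ballToCube x (eqF F hn ⟨k, hk⟩))
    have h0 : (0:ℝ) ≤ (t + 1) / 2 := by linarith [hc.1]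
    have h1 : (t + 1) / 2 ≤ 1 := by linarith [hc.2]
    constructor
    · show h * (F k).1 ≤ chartF h F hn x k
      rw [chartF]; simp only [dif_pos hk]
      nlinarith
    · show chartF h F hn x k ≤ h * ((F k).1 + 1)
      rw [chartF]; simp only [dif_pos hk]
      nlinarith
  · simp only [if_neg hk]
    show chartF h F hn x k = h * (F k).1
    rw [chartF]; simp only [dif_neg hk]

lemma chartFInv_mem_closedBall (h : ℝ) {n : ℕ} (F : Fin N → ℤ × Bool) (hn : dimF F = n)
    (y : E N) : chartFInv h F hn y ∈ closedBall (0 : E n) 1 := by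
  rw [mem_closedBall, dist_zero_right, chartFInv, norm_cubeToBall]
  rw [supN_le_iff zero_le_one]
  intro i
  show |cl _| ≤ 1
  rw [abs_le]
  exact cl_mem _

lemma chartF_leftInv {h : ℝ} (hh : 0 < h) {n : ℕ} (F : Fin N → ℤ × Bool) (hn : dimF F = n)
    {x : E n} (hx : x ∈ closedBall (0 : E n) 1) : chartFInv h F hn (chartF h F hn x) = x := by
  rw [mem_closedBall, dist_zero_right] at hx
  have hsup : supN (ballToCube x) ≤ 1 := by rw [supN_ballToCube]; exact hx
  have hcoord : ∀ i, |ballToCube x i| ≤ 1 := fun i =>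
    le_trans (abs_coord_le_supN _ i) hsup
  rw [chartFInv]
  have : WithLp.toLp 2 (fun i => cl (2 * ((chartF h F hn x) ((eqF F hn).symm i).1 / h -
      ((F ((eqF F hn).symm i).1).1 : ℝ)) - 1)) = ballToCube x := by
    ext i
    rw [PiLp.toLp_apply]
    set k := (eqF F hn).symm i with hk_def
    have hk : (F k.1).2 = true := k.2
    have heval : chartF h F hn x k.1 =
        h * ((F k.1).1 + (cl (ballToCube x (eqF F hn ⟨k.1, hk⟩)) + 1) / 2) := by
      rw [chartF]; simp only [dif_pos hk]
    have hsub : (⟨k.1, hk⟩ : {k // (F k).2 = true}) = k := rfl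
    rw [hsub] at heval
    have hi : eqF F hn k = i := by rw [hk_def]; exact (eqF F hn).apply_symm_apply i
    rw [hi] at heval
    rw [heval]
    have hcl : cl (ballToCube x i) = ballToCube x i :=
      cl_eq_self (by linarith [(abs_le.1 (hcoord i)).1]) (by linarith [(abs_le.1 (hcoord i)).2])
    rw [hcl]
    have halg : 2 * (h * ((F k.1).1 + (ballToCube x i + 1) / 2) / h - ((F k.1).1 : ℝ)) - 1
        = ballToCube x i := by
      field_simp
      ring
    rw [halg, hcl]
  rw [this, cubeToBall_ballToCube]

lemma chartF_rightInv {h : ℝ} (hh : 0 < h) {n : ℕ} (F : Fin N → ℤ × Bool) (hn : dimF F = n)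
    {y : E N} (hy : y ∈ closedFace h F) : chartF h F hn (chartFInv h F hn y) = y := by
  ext k
  show chartF h F hn (chartFInv h F hn y) k = y k
  rw [chartF]
  by_cases hk : (F k).2 = true
  · simp only [dif_pos hk]
    rw [chartFInv, ballToCube_cubeToBall]; simp only [PiLp.toLp_apply]
    set i := eqF F hn ⟨k, hk⟩ with hi_def
    have hki : (eqF F hn).symm i = ⟨k, hk⟩ := by rw [hi_def]; exact (eqF F hn).symm_apply_apply _
    rw [hki]
    have hface := hy k
    rw [if_pos hk] at hface
    have ht1 : -1 ≤ 2 * (y k / h - ((F k).1 : ℝ)) - 1 := by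
      have : ((F k).1 : ℝ) ≤ y k / h := by
        rw [le_div_iff₀ hh]; linarith [hface.1]
      linarith
    have ht2 : 2 * (y k / h - ((F k).1 : ℝ)) - 1 ≤ 1 := by
      have : y k / h ≤ ((F k).1 : ℝ) + 1 := by
        rw [div_le_iff₀ hh]; linarith [hface.2]
      linarith
    rw [cl_eq_self ht1 ht2]
    have : cl (2 * (y k / h - ((F k).1 : ℝ)) - 1) = 2 * (y k / h - ((F k).1 : ℝ)) - 1 :=
      cl_eq_self ht1 ht2
    rw [this]
    field_simp
    ring
  · simp only [dif_neg hk]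
    have hface := hy k
    rw [if_neg hk] at hface
    exact hface.symm


lemma chartF_image_closedBall {h : ℝ} (hh : 0 < h) {n : ℕ} (F : Fin N → ℤ × Bool)
    (hn : dimF F = n) : chartF h F hn '' closedBall 0 1 = closedFace h F := by
  apply Set.Subset.antisymm
  · rintro - ⟨x, -, rfl⟩
    exact chartF_mem_closedFace hh.le F hn x
  · intro y hy
    exact ⟨chartFInv h F hn y, chartFInv_mem_closedBall h F hn y, chartF_rightInv hh F hn hy⟩

lemma chartF_mem_openFace {h : ℝ} (hh : 0 < h) {n : ℕ} (F : Fin N → ℤ × Bool)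
    (hn : dimF F = n) {x : E n} (hx : x ∈ ball (0 : E n) 1) :
    chartF h F hn x ∈ openFace h F := by
  rw [mem_ball, dist_zero_right] at hx
  intro k
  by_cases hk : (F k).2 = true
  · simp only [hk, if_true]
    set i := eqF F hn ⟨k, hk⟩
    have hco : |ballToCube x i| < 1 :=
      lt_of_le_of_lt (le_trans (abs_coord_le_supN _ i) (supN_ballToCube x).le) hx
    have hcl : cl (ballToCube x i) = ballToCube x i :=
      cl_eq_self (by linarith [(abs_lt.1 hco).1]) (by linarith [(abs_lt.1 hco).2])
    have heval : chartF h F hn x k = h * ((F k).1 + (cl (ballToCube x i) + 1) / 2) := by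
      rw [chartF]; simp only [dif_pos hk]; rfl
    rw [heval, hcl]
    constructor
    · nlinarith [(abs_lt.1 hco).1]
    · nlinarith [(abs_lt.1 hco).2]
  · simp only [hk, if_false]
    show chartF h F hn x k = h * (F k).1
    rw [chartF]; simp only [dif_neg hk]

lemma chartFInv_mem_ball {h : ℝ} (hh : 0 < h) {n : ℕ} (F : Fin N → ℤ × Bool)
    (hn : dimF F = n) {y : E N} (hy : y ∈ openFace h F) :
    chartFInv h F hn y ∈ ball (0 : E n) 1 := by
  rw [mem_ball, dist_zero_right, chartFInv, norm_cubeToBall]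
  rcases Nat.eq_zero_or_pos n with hn0 | hn0
  · subst hn0
    have : WithLp.toLp 2 (fun i : Fin 0 => cl (2 * (y ((eqF F hn).symm i).1 / h -
        ((F ((eqF F hn).symm i).1).1 : ℝ)) - 1)) = (0 : E 0) := by
      ext i; exact absurd i.2 (by omega)
    rw [this, supN_zero]; norm_num
  · obtain ⟨i, hi⟩ := exists_coord_eq_supN hn0
      (WithLp.toLp 2 (fun i => cl (2 * (y ((eqF F hn).symm i).1 / h - ((F ((eqF F hn).symm i).1).1 : ℝ)) - 1)) : E n)
    rw [← hi]
    set k := (eqF F hn).symm i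
    have hk : (F k.1).2 = true := k.2
    have hface := hy k.1
    rw [if_pos hk] at hface
    have ht1 : -1 < 2 * (y k.1 / h - ((F k.1).1 : ℝ)) - 1 := by
      have : ((F k.1).1 : ℝ) < y k.1 / h := by
        rw [lt_div_iff₀ hh]; linarith [hface.1]
      linarith
    have ht2 : 2 * (y k.1 / h - ((F k.1).1 : ℝ)) - 1 < 1 := by
      have : y k.1 / h < ((F k.1).1 : ℝ) + 1 := by
        rw [div_lt_iff₀ hh]; linarith [hface.2]
      linarith
    show |cl (2 * (y k.1 / h - ((F k.1).1 : ℝ)) - 1)| < 1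
    rw [cl_eq_self ht1.le ht2.le, abs_lt]
    exact ⟨ht1, ht2⟩

lemma chartF_image_ball {h : ℝ} (hh : 0 < h) {n : ℕ} (F : Fin N → ℤ × Bool)
    (hn : dimF F = n) : chartF h F hn '' ball 0 1 = openFace h F := by
  apply Set.Subset.antisymm
  · rintro - ⟨x, hx, rfl⟩
    exact chartF_mem_openFace hh F hn hx
  · intro y hy
    exact ⟨chartFInv h F hn y, chartFInv_mem_ball hh F hn hy,
      chartF_rightInv hh F hn (openFace_subset_closedFace h F hy)⟩

lemma openFace_eq_of_mem {h : ℝ} (hh : 0 < h) {F F' : Fin N → ℤ × Bool} {y : E N}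
    (hy : y ∈ openFace h F) (hy' : y ∈ openFace h F') : F = F' := by
  funext k
  have h1 := hy k
  have h2 := hy' k
  have key : ∀ (j j' : ℤ) (b b' : Bool),
      (if b then h * j < y k ∧ y k < h * (j + 1) else y k = h * j) →
      (if b' then h * j' < y k ∧ y k < h * (j' + 1) else y k = h * j') →
      (j, b) = (j', b') := by
    intro j j' b b' hb hb'
    have cast1 : ∀ a b : ℤ, h * (a:ℝ) < h * (b:ℝ) → a < b := by
      intro a b hab
      exact_mod_cast (mul_lt_mul_iff_right₀ hh).1 hab
    rcases b <;> rcases b' <;>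
      simp only [Bool.false_eq_true, if_true, if_false, reduceIte] at hb hb'
    · rw [hb'] at hb
      have hjj : j = j' := by
        have := mul_left_cancel₀ hh.ne' hb.symm
        exact_mod_cast this
      rw [hjj]
    · rw [hb] at hb'
      have g1 : j' < j := cast1 j' j hb'.1
      have g2 : j < j' + 1 := by
        have : h * (j:ℝ) < h * ((j' + 1 : ℤ) : ℝ) := by push_cast; linarith [hb'.2]
        exact cast1 j (j' + 1) this
      omega
    · rw [hb'] at hb
      have g1 : j < j' := cast1 j j' hb.1
      have g2 : j' < j + 1 := by
        have : h * (j':ℝ) < h * ((j + 1 : ℤ) : ℝ) := by push_cast; linarith [hb.2]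
        exact cast1 j' (j + 1) this
      omega
    · have g1 : j < j' + 1 := by
        have : h * (j:ℝ) < h * ((j' + 1 : ℤ) : ℝ) := by push_cast; linarith [hb.1, hb'.2]
        exact cast1 j (j' + 1) this
      have g2 : j' < j + 1 := by
        have : h * (j':ℝ) < h * ((j + 1 : ℤ) : ℝ) := by push_cast; linarith [hb'.1, hb.2]
        exact cast1 j' (j + 1) this
      have hjj : j = j' := by omega
      rw [hjj]
  exact key (F k).1 (F' k).1 (F k).2 (F' k).2 h1 h2


lemma continuous_chartF (h : ℝ) {n : ℕ} (F : Fin N → ℤ × Bool) (hn : dimF F = n) :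
    Continuous (chartF h F hn) := by
  refine (PiLp.continuous_toLp 2 _).comp (f := fun x k => chartF h F hn x k) ?_
  apply continuous_pi
  intro k
  by_cases hk : (F k).2 = true
  · have : (fun x : E n => chartF h F hn x k) = fun x : E n =>
        h * ((F k).1 + (cl (ballToCube x (eqF F hn ⟨k, hk⟩)) + 1) / 2) := by
      funext x; rw [chartF]; simp only [dif_pos hk]
    rw [this]
    have hc : Continuous fun x : E n => ballToCube x (eqF F hn ⟨k, hk⟩) :=
      (PiLp.continuous_apply 2 _ (eqF F hn ⟨k, hk⟩)).comp continuous_ballToCube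
    exact continuous_const.mul (continuous_const.add
      (((continuous_cl.comp hc).add continuous_const).div_const 2))
  · have : (fun x : E n => chartF h F hn x k) = fun _ : E n => h * ((F k).1 : ℝ) := by
      funext x; rw [chartF]; simp only [dif_neg hk]
    rw [this]
    exact continuous_const

lemma continuous_chartFInv (h : ℝ) {n : ℕ} (F : Fin N → ℤ × Bool) (hn : dimF F = n) :
    Continuous (chartFInv h F hn) := by
  apply continuous_cubeToBall.comp
  apply (PiLp.continuous_toLp 2 _).comp
  apply continuous_pi
  intro i
  have hev : Continuous fun y : E N => y ((eqF F hn).symm i).1 := PiLp.continuous_apply 2 _ _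
  exact continuous_cl.comp ((continuous_const.mul ((hev.div_const h).sub
    continuous_const)).sub continuous_const)



lemma dimF_update_lt {F : Fin N → ℤ × Bool} {k₀ : Fin N} (hk₀ : (F k₀).2 = true) (j' : ℤ) :
    dimF (Function.update F k₀ (j', false)) < dimF F := by
  classical
  rw [dimF, dimF, Fintype.card_subtype, Fintype.card_subtype]
  apply Finset.card_lt_card
  constructor
  · intro k hk
    rw [Finset.mem_filter] at hk ⊢
    refine ⟨Finset.mem_univ _, ?_⟩
    by_cases hkk : k = k₀
    · subst hkk
      rw [Function.update_self] at hk
      exact absurd hk.2 (by simp)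
    · rw [Function.update_of_ne hkk] at hk
      exact hk.2
  · intro hsub
    have hmem : k₀ ∈ Finset.filter (fun k => (F k).2 = true) Finset.univ :=
      Finset.mem_filter.2 ⟨Finset.mem_univ _, hk₀⟩
    have := hsub hmem
    rw [Finset.mem_filter, Function.update_self] at this
    exact absurd this.2 (by simp)

lemma chartF_sphere_mem_subface {h : ℝ} (hh : 0 < h) {n : ℕ} (F : Fin N → ℤ × Bool)
    (hn : dimF F = n) {x : E n} (hx : x ∈ sphere (0 : E n) 1) :
    ∃ (k₀ : Fin N) (_ : (F k₀).2 = true) (j' : ℤ),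
      (j' = (F k₀).1 ∨ j' = (F k₀).1 + 1) ∧
      chartF h F hn x ∈ closedFace h (Function.update F k₀ (j', false)) := by
  rw [mem_sphere_iff_norm, sub_zero] at hx
  have hn0 : 0 < n := by
    rcases Nat.eq_zero_or_pos n with h0 | h0
    · exfalso
      subst h0
      have : x = 0 := by ext i; exact absurd i.2 (by omega)
      rw [this, norm_zero] at hx
      norm_num at hx
    · exact h0
  obtain ⟨i, hi⟩ := exists_coord_eq_supN hn0 (ballToCube x)
  rw [supN_ballToCube, hx] at hi
  set ks := (eqF F hn).symm i with hks
  have hk₀ : (F ks.1).2 = true := ks.2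
  have hsub : (⟨ks.1, hk₀⟩ : {k // (F k).2 = true}) = ks := rfl
  have heqi : eqF F hn ⟨ks.1, hk₀⟩ = i := by rw [hsub, hks]; exact (eqF F hn).apply_symm_apply i
  have heval : chartF h F hn x ks.1 =
      h * ((F ks.1).1 + (cl (ballToCube x i) + 1) / 2) := by
    rw [chartF]; simp only [dif_pos hk₀]
    congr 5
    exact congrArg (ballToCube x) heqi
  have habs : ballToCube x i = 1 ∨ ballToCube x i = -1 := by
    rcases abs_eq (by norm_num : (0:ℝ) ≤ 1) |>.1 hi with h1 | h1
    · exact Or.inl h1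
    · exact Or.inr h1
  have hval : ∃ j' : ℤ, (j' = (F ks.1).1 ∨ j' = (F ks.1).1 + 1) ∧
      chartF h F hn x ks.1 = h * (j' : ℝ) := by
    rcases habs with h1 | h1
    · refine ⟨(F ks.1).1 + 1, Or.inr rfl, ?_⟩
      rw [heval, h1, cl_eq_self (by norm_num) le_rfl]
      push_cast; ring
    · refine ⟨(F ks.1).1, Or.inl rfl, ?_⟩
      rw [heval, h1, cl_eq_self le_rfl (by norm_num)]
      push_cast; ring
  obtain ⟨j', hj'or, hj'⟩ := hval
  refine ⟨ks.1, hk₀, j', hj'or, ?_⟩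
  intro k
  by_cases hkk : k = ks.1
  · subst hkk
    rw [Function.update_self]
    simp only [if_false, Bool.false_eq_true, reduceIte]
    exact hj'
  · rw [Function.update_of_ne hkk]
    exact chartF_mem_closedFace hh.le F hn x k


/-! ### Cubical complexes -/

def topF (c : Fin N → ℤ) : Fin N → ℤ × Bool := fun k => (c k, true)

lemma dimF_topF (c : Fin N → ℤ) : dimF (topF c) = N := by
  classical
  rw [dimF, Fintype.card_subtype]
  simp [topF]

def cube (h : ℝ) (c : Fin N → ℤ) : Set (E N) := closedFace h (topF c)

def subdata (F : Fin N → ℤ × Bool) (c : Fin N → ℤ) : Prop :=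
  ∀ k, if (F k).2 then (F k).1 = c k else (F k).1 = c k ∨ (F k).1 = c k + 1

lemma subdata_topF (c : Fin N → ℤ) : subdata (topF c) c := by
  intro k
  simp [topF]

lemma closedFace_subset_cube {h : ℝ} (hh : 0 ≤ h) {F : Fin N → ℤ × Bool} {c : Fin N → ℤ}
    (hs : subdata F c) : closedFace h F ⊆ cube h c := by
  intro y hy k
  have hyk := hy k
  have hsk := hs k
  have hck : (h * (c k : ℝ) ≤ y k ∧ y k ≤ h * ((c k : ℝ) + 1)) := by
    by_cases hk : (F k).2 = true
    · rw [if_pos hk] at hyk hsk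
      rw [hsk] at hyk
      exact hyk
    · rw [if_neg hk] at hyk hsk
      rcases hsk with h1 | h1 <;> rw [h1] at hyk
      · constructor
        · exact hyk.ge
        · rw [hyk]; nlinarith
      · constructor
        · rw [hyk]; push_cast; nlinarith
        · rw [hyk]; push_cast; nlinarith
  show if (topF c k).2 then _ ∧ _ else _
  simp only [topF, if_true]
  exact hck

lemma subdata_update {F : Fin N → ℤ × Bool} {c : Fin N → ℤ} (hs : subdata F c)
    {k₀ : Fin N} (hk₀ : (F k₀).2 = true) {j' : ℤ}
    (hj' : j' = (F k₀).1 ∨ j' = (F k₀).1 + 1) :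
    subdata (Function.update F k₀ (j', false)) c := by
  intro k
  by_cases hkk : k = k₀
  · subst hkk
    rw [Function.update_self]
    simp only [Bool.false_eq_true, if_false, reduceIte]
    have := hs k
    rw [if_pos hk₀] at this
    rcases hj' with h1 | h1
    · left; rw [h1, this]
    · right; rw [h1, this]
  · rw [Function.update_of_ne hkk]
    exact hs k

def Adm (𝒞 : Finset (Fin N → ℤ)) (F : Fin N → ℤ × Bool) : Prop :=
  ∃ c ∈ 𝒞, subdata F c

def polyhedron (h : ℝ) (𝒞 : Finset (Fin N → ℤ)) : Set (E N) :=
  ⋃ c ∈ 𝒞, cube h c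

lemma closedFace_subset_polyhedron {h : ℝ} (hh : 0 ≤ h) {𝒞 : Finset (Fin N → ℤ)}
    {F : Fin N → ℤ × Bool} (hF : Adm 𝒞 F) : closedFace h F ⊆ polyhedron h 𝒞 := by
  obtain ⟨c, hc, hs⟩ := hF
  exact subset_trans (closedFace_subset_cube hh hs)
    (subset_biUnion_of_mem (u := fun c => cube h c) hc)

lemma adm_finite (𝒞 : Finset (Fin N → ℤ)) : {F : Fin N → ℤ × Bool | Adm 𝒞 F}.Finite := by
  classical
  apply Set.Finite.subset
    (Set.Finite.pi (t := fun k : Fin N => ⋃ c ∈ (𝒞 : Set (Fin N → ℤ)),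
      ({(c k, true), (c k, false), (c k + 1, false)} : Set (ℤ × Bool))) ?_)
  · intro F hF
    obtain ⟨c, hc, hs⟩ := hF
    intro k _
    apply mem_biUnion hc
    have hsk := hs k
    by_cases hk : (F k).2 = true
    · rw [if_pos hk] at hsk
      have h2 : F k = (c k, true) := by rw [← hsk, ← hk]
      simp [h2]
    · rw [if_neg hk] at hsk
      have hk2 : (F k).2 = false := by simpa using hk
      rcases hsk with h1 | h1
      · have : F k = (c k, false) := by rw [← h1, ← hk2]
        simp [this]
      · have : F k = (c k + 1, false) := by rw [← h1, ← hk2]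
        simp [this]
  · intro k
    apply Set.Finite.biUnion 𝒞.finite_toSet
    intro c _
    exact (Set.finite_singleton _).insert _ |>.insert _

lemma adm_subtype_finite (𝒞 : Finset (Fin N → ℤ)) : Finite {F // Adm 𝒞 F} :=
  (adm_finite 𝒞).to_subtype


/-! ### The CW structure on a cubical polyhedron -/

abbrev cellT (𝒞 : Finset (Fin N → ℤ)) (n : ℕ) : Type :=
  {F : Fin N → ℤ × Bool // Adm 𝒞 F ∧ dimF F = n}

lemma finite_cellT (𝒞 : Finset (Fin N → ℤ)) (n : ℕ) : Finite (cellT 𝒞 n) := by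
  haveI := adm_subtype_finite 𝒞
  apply Finite.of_injective (fun i : cellT 𝒞 n => (⟨i.1, i.2.1⟩ : {F // Adm 𝒞 F}))
  intro i j hij
  exact Subtype.ext (congrArg (fun t : {F // Adm 𝒞 F} => t.1) hij)

lemma finite_sigma_cellT (𝒞 : Finset (Fin N → ℤ)) : Finite (Σ n, cellT 𝒞 n) := by
  haveI := adm_subtype_finite 𝒞
  apply Finite.of_injective (fun p : Σ n, cellT 𝒞 n => (⟨p.2.1, p.2.2.1⟩ : {F // Adm 𝒞 F}))
  rintro ⟨n, F, hF⟩ ⟨m, G, hG⟩ hFG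
  have hval : F = G := congrArg Subtype.val hFG
  subst hval
  have : n = m := by rw [← hF.2, ← hG.2]
  subst this
  rfl

def cellMap (h : ℝ) (hh : 0 < h) (𝒞 : Finset (Fin N → ℤ)) {n : ℕ} (i : cellT 𝒞 n) :
    PartialEquiv (E n) ↥(polyhedron h 𝒞) where
  toFun x := ⟨chartF h i.1 i.2.2 x,
    closedFace_subset_polyhedron hh.le i.2.1 (chartF_mem_closedFace hh.le _ _ x)⟩
  invFun z := chartFInv h i.1 i.2.2 z.1
  source := closedBall 0 1
  target := {z | (z : E N) ∈ closedFace h i.1}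
  map_source' x _ := chartF_mem_closedFace hh.le _ _ x
  map_target' z _ := chartFInv_mem_closedBall h _ _ z.1
  left_inv' x hx := chartF_leftInv hh _ _ hx
  right_inv' z hz := Subtype.ext (chartF_rightInv hh _ _ hz)

lemma cellMap_image_closedBall (h : ℝ) (hh : 0 < h) (𝒞 : Finset (Fin N → ℤ)) {n : ℕ}
    (i : cellT 𝒞 n) :
    ↑(cellMap h hh 𝒞 i) '' closedBall 0 1 = {z : ↥(polyhedron h 𝒞) | ↑z ∈ closedFace h i.1} :=
  (cellMap h hh 𝒞 i).image_source_eq_target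

lemma cellMap_image_ball (h : ℝ) (hh : 0 < h) (𝒞 : Finset (Fin N → ℤ)) {n : ℕ}
    (i : cellT 𝒞 n) :
    ↑(cellMap h hh 𝒞 i) '' ball 0 1 = {z : ↥(polyhedron h 𝒞) | ↑z ∈ openFace h i.1} := by
  apply Set.Subset.antisymm
  · rintro - ⟨x, hx, rfl⟩
    exact chartF_mem_openFace hh i.1 i.2.2 hx
  · intro z hz
    refine ⟨chartFInv h i.1 i.2.2 z.1, chartFInv_mem_ball hh i.1 i.2.2 hz, ?_⟩
    exact Subtype.ext (chartF_rightInv hh i.1 i.2.2 (openFace_subset_closedFace h i.1 hz))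

lemma cw_union (h : ℝ) (hh : 0 < h) (𝒞 : Finset (Fin N → ℤ)) :
    ⋃ (n : ℕ) (i : cellT 𝒞 n), ↑(cellMap h hh 𝒞 i) '' closedBall 0 1 =
      (Set.univ : Set ↥(polyhedron h 𝒞)) := by
  apply Set.eq_univ_of_forall
  intro z
  have hz : (z : E N) ∈ ⋃ c ∈ 𝒞, cube h c := z.2
  rw [mem_iUnion₂] at hz
  obtain ⟨c, hc, hcube⟩ := hz
  rw [mem_iUnion]
  refine ⟨N, mem_iUnion.2 ⟨⟨topF c, ⟨c, hc, subdata_topF c⟩, dimF_topF c⟩, ?_⟩⟩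
  rw [cellMap_image_closedBall]
  exact hcube

def cwOf (h : ℝ) (hh : 0 < h) (𝒞 : Finset (Fin N → ℤ)) :
    CWStructure ↥(polyhedron h 𝒞) where
  cell n := cellT 𝒞 n
  map n i := cellMap h hh 𝒞 i
  source_eq n i := rfl
  continuousOn n i :=
    (((continuous_chartF h i.1 i.2.2).subtype_mk _)).continuousOn
  continuousOn_symm n i :=
    ((continuous_chartFInv h i.1 i.2.2).comp continuous_subtype_val).continuousOn
  pairwiseDisjoint' := by
    rintro ⟨na, ia⟩ - ⟨nb, ib⟩ - hab
    simp only [Function.onFun]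
    rw [Set.disjoint_left]
    intro z hza hzb
    rw [cellMap_image_ball] at hza hzb
    have hFeq : ia.1 = ib.1 := openFace_eq_of_mem hh hza hzb
    apply hab
    have hnm : na = nb := by rw [← ia.2.2, ← ib.2.2, hFeq]
    subst hnm
    have : ia = ib := Subtype.ext hFeq
    rw [this]
  mapsTo n i := by
    classical
    haveI : ∀ m, Finite (cellT 𝒞 m) := finite_cellT 𝒞
    letI : ∀ m, Fintype (cellT 𝒞 m) := fun m => Fintype.ofFinite _
    refine ⟨fun _ => Finset.univ, ?_⟩
    intro x hx
    obtain ⟨k₀, hk₀, j', hj'or, hmem⟩ := chartF_sphere_mem_subface hh i.1 i.2.2 hx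
    set F' := Function.update i.1 k₀ (j', false) with hF'
    have hadm : Adm 𝒞 F' := by
      obtain ⟨c, hc, hs⟩ := i.2.1
      exact ⟨c, hc, subdata_update hs hk₀ hj'or⟩
    have hlt : dimF F' < n := i.2.2 ▸ dimF_update_lt hk₀ j'
    rw [mem_iUnion]
    refine ⟨dimF F', mem_iUnion.2 ⟨hlt, mem_iUnion.2
      ⟨⟨F', hadm, rfl⟩, mem_iUnion.2 ⟨Finset.mem_univ _, ?_⟩⟩⟩⟩
    rw [cellMap_image_closedBall]
    exact hmem
  closed' A hA := by
    haveI : Finite (Σ n, cellT 𝒞 n) := finite_sigma_cellT 𝒞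
    have hcov : A = ⋃ p : Σ n, cellT 𝒞 n,
        (A ∩ ↑(cellMap h hh 𝒞 p.2) '' closedBall 0 1) := by
      rw [← Set.inter_iUnion]
      rw [show (⋃ p : Σ n, cellT 𝒞 n, ↑(cellMap h hh 𝒞 p.2) '' closedBall 0 1) =
          (Set.univ : Set ↥(polyhedron h 𝒞)) from ?_]
      · rw [Set.inter_univ]
      · rw [Set.iUnion_sigma]
        exact cw_union h hh 𝒞
    rw [hcov]
    exact isClosed_iUnion_of_finite fun p => hA p.1 p.2
  union' := cw_union h hh 𝒞

lemma cwOf_isFinite (h : ℝ) (hh : 0 < h) (𝒞 : Finset (Fin N → ℤ)) :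
    (cwOf h hh 𝒞).IsFinite :=
  finite_sigma_cellT 𝒞

end CubeCW
end


/-- Example 1.2(i) (Borsuk): a compact neighbourhood retract `X ⊆ ℝᴺ` is dominated by a
finite CW complex, with `d ∘ s` equal (not just homotopic) to the identity; in
particular `X` is finitely dominated. -/
theorem compact_euclidean_neighbourhood_retract_finitelyDominated
    {N : ℕ} (X : Set (EuclideanSpace ℝ (Fin N))) (hX : IsCompact X)
    (U : Set (EuclideanSpace ℝ (Fin N))) (hU : IsOpen U) (hXU : X ⊆ U)
    (r : U → EuclideanSpace ℝ (Fin N)) (hr : Continuous r)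
    (hrX : ∀ u : U, r u ∈ X)
    (hret : ∀ u : U, (u : EuclideanSpace ℝ (Fin N)) ∈ X → r u = u) :
    (∃ (K : Type) (_ : TopologicalSpace K) (c : CWStructure K), c.IsFinite ∧
      ∃ (d : C(K, X)) (s : C(X, K)), d.comp s = ContinuousMap.id X) ∧
    FinitelyDominated X := by
  classical
  obtain ⟨δ, hδ, hthick⟩ := hX.exists_thickening_subset_open hU hXU
  set h : ℝ := δ / (N + 1) with hdef
  have hh : 0 < h := by positivity
  -- the diameter of a grid cube is less than δ
  have hdiam : ∀ (c : Fin N → ℤ) (y x : EuclideanSpace ℝ (Fin N)),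
      y ∈ CubeCW.cube h c → x ∈ CubeCW.cube h c → dist y x < δ := by
    intro c y x hy hx
    have hcoord : ∀ k, dist (y k) (x k) ≤ h := by
      intro k
      have h1 := hy k
      have h2 := hx k
      simp only [CubeCW.topF, if_true] at h1 h2
      rw [Real.dist_eq, abs_le]
      constructor <;> nlinarith [h1.1, h1.2, h2.1, h2.2]
    have hbound : dist y x ≤ √N * h := by
      rw [EuclideanSpace.dist_eq]
      have hsum : (∑ k, dist (y k) (x k) ^ 2) ≤ (N : ℝ) * h ^ 2 := by
        calc (∑ k, dist (y k) (x k) ^ 2) ≤ ∑ _k : Fin N, h ^ 2 := by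
              apply Finset.sum_le_sum
              intro k _
              exact pow_le_pow_left₀ dist_nonneg (hcoord k) 2
          _ = (N : ℝ) * h ^ 2 := by simp [Finset.sum_const, mul_comm]
      calc √(∑ k, dist (y k) (x k) ^ 2) ≤ √((N : ℝ) * h ^ 2) := Real.sqrt_le_sqrt hsum
        _ = √N * h := by
            rw [Real.sqrt_mul (Nat.cast_nonneg N), Real.sqrt_sq hh.le]
    have hlt : √N * h < δ := by
      have hsq : √(N : ℝ) < N + 1 := by
        rw [Real.sqrt_lt' (by positivity)]
        nlinarith [Nat.cast_nonneg (α := ℝ) N]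
      rw [hdef]
      rw [div_eq_mul_inv]
      have : √N * (δ * ((N : ℝ) + 1)⁻¹) = δ * (√N / ((N : ℝ) + 1)) := by ring
      rw [this]
      have h2 : √N / ((N : ℝ) + 1) < 1 := by
        rw [div_lt_one (by positivity)]
        exact hsq
      nlinarith [h2, hδ]
    exact lt_of_le_of_lt hbound hlt
  -- the finite set of grid cubes meeting X
  obtain ⟨R, hR⟩ := hX.isBounded.subset_closedBall (0 : EuclideanSpace ℝ (Fin N))
  have hfin : {c : Fin N → ℤ | (CubeCW.cube h c ∩ X).Nonempty}.Finite := by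
    apply Set.Finite.subset (Set.Finite.pi (t := fun _ : Fin N =>
      {m : ℤ | (m : ℝ) ∈ Set.Icc (-(R / h) - 1) (R / h)}) ?_)
    · rintro c ⟨x, hxc, hxX⟩ k -
      have hxR : |x k| ≤ R := by
        have h1 : ‖x‖ ≤ R := by
          have := hR hxX
          rwa [mem_closedBall, dist_zero_right] at this
        exact le_trans (CubeCW.abs_coord_le_norm x k) h1
      have h1 := hxc k
      simp only [CubeCW.topF, if_true] at h1
      constructor
      · -- -(R/h) - 1 ≤ c k
        have hge : -R ≤ h * ((c k : ℝ) + 1) := by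
          rcases abs_le.1 hxR with ⟨hl, _⟩
          linarith [h1.2]
        have h2 : -R / h ≤ (c k : ℝ) + 1 := by
          rw [div_le_iff₀ hh]
          nlinarith
        have h3 : -(R / h) = -R / h := (neg_div _ _).symm
        linarith
      · -- c k ≤ R/h
        have : h * (c k : ℝ) ≤ R := by
          rcases abs_le.1 hxR with ⟨_, hu⟩
          linarith [h1.1]
        rw [le_div_iff₀ hh]
        linarith [this]
    · intro k
      apply Set.Finite.subset (Set.finite_Icc (⌈-(R / h) - 1⌉ : ℤ) ⌊R / h⌋)
      intro m hm
      rw [Set.mem_Icc]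
      exact ⟨Int.ceil_le.2 hm.1, Int.le_floor.2 hm.2⟩
  set 𝒞 : Finset (Fin N → ℤ) := hfin.toFinset with h𝒞
  set P : Set (EuclideanSpace ℝ (Fin N)) := CubeCW.polyhedron h 𝒞 with hP
  have hXP : X ⊆ P := by
    intro x hx
    set c : Fin N → ℤ := fun k => ⌊x k / h⌋ with hc
    have hxc : x ∈ CubeCW.cube h c := by
      intro k
      simp only [CubeCW.topF, if_true]
      constructor
      · have := Int.floor_le (x k / h)
        calc h * (c k : ℝ) ≤ h * (x k / h) :=
              mul_le_mul_of_nonneg_left this hh.le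
          _ = x k := by field_simp
      · have := (Int.lt_floor_add_one (x k / h)).le
        calc x k = h * (x k / h) := by field_simp
          _ ≤ h * ((c k : ℝ) + 1) := by
              apply mul_le_mul_of_nonneg_left _ hh.le
              push_cast
              exact this
    have hcC : c ∈ 𝒞 := by
      rw [h𝒞, hfin.mem_toFinset]
      exact ⟨x, hxc, hx⟩
    exact Set.mem_biUnion hcC hxc
  have hPU : P ⊆ U := by
    intro y hy
    rw [hP, CubeCW.polyhedron, Set.mem_iUnion₂] at hy
    obtain ⟨c, hc, hyc⟩ := hy
    rw [h𝒞, hfin.mem_toFinset] at hc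
    obtain ⟨x, hxc, hxX⟩ := hc
    apply hthick
    rw [mem_thickening_iff]
    exact ⟨x, hxX, hdiam c y x hyc hxc⟩
  -- the maps
  let sMap : C(X, ↥P) := ⟨fun x => ⟨x.1, hXP x.2⟩, continuous_subtype_val.subtype_mk _⟩
  let dMap : C(↥P, X) := ⟨fun z => ⟨r ⟨z.1, hPU z.2⟩, hrX _⟩,
    (hr.comp (continuous_subtype_val.subtype_mk _)).subtype_mk _⟩
  have heq : dMap.comp sMap = ContinuousMap.id X := by
    apply ContinuousMap.ext
    intro x
    apply Subtype.ext
    exact hret ⟨(x : EuclideanSpace ℝ (Fin N)), hPU (hXP x.2)⟩ x.2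
  refine ⟨⟨↥P, inferInstance, CubeCW.cwOf h hh 𝒞, CubeCW.cwOf_isFinite h hh 𝒞,
    dMap, sMap, heq⟩, ⟨↥P, inferInstance, CubeCW.cwOf h hh 𝒞, CubeCW.cwOf_isFinite h hh 𝒞,
    dMap, sMap, heq ▸ ContinuousMap.Homotopic.refl _⟩⟩
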